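/- For an FI-module V over ℤ and a finite set T with |T| = n, the FI-homology groups of V at T are computed by the chain complex S_• with S_p = ⊕_{S ⊆ T, |S| = n−p} V(S) and differential d(x_S) = Σ_{i ∉ S} (−1)^{ε(S,i)} V(S ↪ S ∪ {i})(x_S) for a suitable sign ε. In particular the zeroth homology of this complex is H₀(V)(T) = coker(⊕_{S⊊T, |S|=n−1} V(S) → V(T)). -/

import Mathlib

/-- The canonical embedding `↥S ↪ ↥T` induced by an inclusion `S ⊆ T` of finite sets. -/
def inclEmb {α : Type*} {S T : Finset α} (h : S ⊆ T) : ↥S ↪ ↥T :=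
  ⟨fun x => ⟨x.1, h x.2⟩, fun a b hab => by cases a; cases b; simpa using hab⟩

/-- An FI-module: a functor from finite sets (here: finite subsets of `ℕ`)
and injections to abelian groups. -/
structure FISystem where
  obj : Finset ℕ → AddCommGrpCat
  map : ∀ {S T : Finset ℕ}, (↥S ↪ ↥T) → (obj S →+ obj T)
  map_id : ∀ S : Finset ℕ, map (Function.Embedding.refl ↥S) = AddMonoidHom.id _
  map_comp : ∀ {S T U : Finset ℕ} (f : ↥S ↪ ↥T) (g : ↥T ↪ ↥U),
    map (f.trans g) = (map g).comp (map f)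

/-- Degree-zero part of the complex computing FI-homology: for an FI-module `V` over `ℤ`
and a finite set `T` with `|T| = n`, the natural map from the cokernel of
`⊕_{S ⊆ T, |S| = n-1} V(S) → V(T)` to the cokernel `H₀(V)(T)` of
`⊕_{S ⊊ T} V(S) → V(T)` is an isomorphism: it suffices to quotient by the images
from codimension-one subsets. -/
theorem stmt12 (V : FISystem) (T : Finset ℕ) :
    Function.Bijective
      (QuotientAddGroup.map
        (⨆ (S : Finset ℕ) (h : S ⊆ T ∧ S.card + 1 = T.card), (V.map (inclEmb h.1)).range)
        (⨆ (S : Finset ℕ) (h : S ⊂ T), (V.map (inclEmb h.subset)).range)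
        (AddMonoidHom.id _)
        (by
          rw [AddSubgroup.comap_id]
          refine iSup_le fun S => iSup_le fun h => ?_
          have hne : S ≠ T := by
            intro e
            subst e
            omega
          have hlt : S ⊂ T := h.1.ssubset_of_ne hne
          exact le_iSup_of_le S (le_iSup_of_le hlt le_rfl))) := by
  have hle : (⨆ (S : Finset ℕ) (h : S ⊂ T), (V.map (inclEmb h.subset)).range)
      ≤ ⨆ (S : Finset ℕ) (h : S ⊆ T ∧ S.card + 1 = T.card), (V.map (inclEmb h.1)).range := by
    refine iSup_le fun S => iSup_le fun h => ?_
    obtain ⟨t, htT, htS⟩ := Finset.exists_of_ssubset h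
    set S' := T.erase t with hS'
    have h1 : S ⊆ S' := fun x hx => Finset.mem_erase.mpr ⟨fun e => htS (e ▸ hx), h.subset hx⟩
    have h2 : S' ⊆ T := Finset.erase_subset _ _
    have hc : S'.card + 1 = T.card := by
      rw [hS', Finset.card_erase_of_mem htT]
      have : 1 ≤ T.card := Finset.card_pos.mpr ⟨t, htT⟩
      omega
    refine le_trans ?_ (le_iSup_of_le S' (le_iSup_of_le ⟨h2, hc⟩ le_rfl))
    intro x hx
    obtain ⟨y, hy⟩ := hx
    refine ⟨V.map (inclEmb h1) y, ?_⟩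
    rw [← AddMonoidHom.comp_apply, ← V.map_comp]
    have : (inclEmb h1).trans (inclEmb h2) = inclEmb h.subset :=
      Function.Embedding.ext fun x => rfl
    rw [this]; exact hy
  constructor
  · rw [injective_iff_map_eq_zero]
    intro x
    refine QuotientAddGroup.induction_on x ?_
    intro a ha
    rw [QuotientAddGroup.map_mk] at ha
    rw [QuotientAddGroup.eq_zero_iff] at ha ⊢
    exact hle ha
  · intro y
    refine QuotientAddGroup.induction_on y ?_
    intro a
    exact ⟨QuotientAddGroup.mk a, by rw [QuotientAddGroup.map_mk]; rfl⟩
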